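/- No mechanism that selects a stable allocation whenever one exists can be strategy-proof for asylum seekers in the setting of Example 7: for any such mechanism φ, either asylum seeker a₂ has a profitable misreport P̂_{a₂} under the true profile P, or asylum seeker a₁ has a profitable misreport P̂_{a₁} under the profile (P̂_{a₂}, P_{−a₂}). -/

import Mathlib

/-- A contract: `(asylum seeker, member state, wait time)`.  Asylum seekers,
member states and wait times are labelled by naturals. -/
abbrev Ctr3 := ℕ × ℕ × ℕ

open Classical in
/-- Pick, from a nonempty set of contracts at member state `m`, the
lowest-wait-time contract of the highest-priority asylum seeker. -/
noncomputable def pick3 (π : ℕ → ℕ) (m : ℕ) (Z : Finset Ctr3)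
    (h : Z.Nonempty) : Ctr3 :=
  let k := (Z.image fun x => toLex ((π x.1 : ℕ), toLex (x.2.2, x.1))).min'
    (h.image _)
  ((ofLex (ofLex k).2).2, m, (ofLex (ofLex k).2).1)

open Classical in
/-- The greedy run of member state `m`'s choice rule `Ĉ_m`, with fuel:
process asylum seekers by priority `π`, accept for each the lowest-wait-time
contract with remaining capacity, stop at quota `q`. -/
noncomputable def run3 (s : ℕ → ℕ) (q : ℕ) (r π : ℕ → ℕ) (m : ℕ)
    (X' : Finset Ctr3) : ℕ → Finset Ctr3 → Finset Ctr3
  | 0, acc => acc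
  | n+1, acc =>
    let Z : Finset Ctr3 := X'.filter fun x => x.2.1 = m ∧
      (acc.filter fun y => y.2.2 = x.2.2).card < r x.2.2 ∧
      ∀ y ∈ acc, y.1 ≠ x.1
    if q ≤ acc.sum (fun x => s x.1) then acc
    else if h : Z.Nonempty then
      run3 s q r π m X' n (insert (pick3 π m Z h) acc)
    else acc

/-- Member state `m`'s choice rule `Ĉ_m` on sets of contracts. -/
noncomputable def Chat3 (s : ℕ → ℕ) (q : ℕ) (r π : ℕ → ℕ) (m : ℕ)
    (X' : Finset Ctr3) : Finset Ctr3 :=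
  run3 s q r π m X' (X'.card + 1) ∅

/-- Priorities of Example 7: `m₂` ranks `a₃ − a₂ − a₁`; the other member
states rank `a₁ − a₂ − a₃` (states `m₁ m₂ m₃ m₄ = 0 1 2 3`, asylum seekers
`a₁ a₂ a₃ = 0 1 2`). -/
def π16 : ℕ → ℕ → ℕ := fun m a => if m = 1 then 2 - a else a

/-- Quotas of Example 7: `q_{m₁} = s(a₁)`, `q_{m₂} = q_{m₃} = 1`,
`q_{m₄} = Σ_a s(a)`. -/
def q16 (s : ℕ → ℕ) : ℕ → ℕ :=
  fun m => if m = 0 then s 0 else if m = 3 then s 0 + s 1 + s 2 else 1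

/-- Capacities of Example 7 (wait times `w_l w_h = 0 1`):
`r^{w_l}_m = 2` and `r^{w_h}_m = Σ_a s(a)` for every member state. -/
def r16 (s : ℕ → ℕ) : ℕ → ℕ → ℕ :=
  fun _ w => if w = 0 then 2 else s 0 + s 1 + s 2

/-- An allocation: at most one contract per asylum seeker, capacities
respected, contracts drawn from the universe of the instance. -/
def Alloc16 (s : ℕ → ℕ) (Y : Finset Ctr3) : Prop :=
  (∀ x ∈ Y, x.1 < 3 ∧ x.2.1 < 4 ∧ x.2.2 < 2) ∧
  (∀ a : ℕ, (Y.filter fun x => x.1 = a).card ≤ 1) ∧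
  (∀ m w : ℕ, (Y.filter fun x => x.2.1 = m ∧ x.2.2 = w).card ≤ r16 s m w)

/-- Stability with respect to the preference profile `p` (where `p a` ranks
`a`'s contracts, lower value = better). -/
def Stable16 (s : ℕ → ℕ) (p : ℕ → Ctr3 → ℕ) (Y : Finset Ctr3) : Prop :=
  (∀ m : ℕ, Chat3 s (q16 s m) (r16 s m) (π16 m) m Y =
    Y.filter fun x => x.2.1 = m) ∧
  ∀ x : Ctr3, x.1 < 3 → x.2.1 < 4 → x.2.2 < 2 → x ∉ Y →
    (∀ y ∈ Y, y.1 = x.1 → p x.1 x < p x.1 y) →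
    x ∉ Chat3 s (q16 s x.2.1) (r16 s x.2.1) (π16 x.2.1) x.2.1 (insert x Y)

section Infra

variable {s : ℕ → ℕ} {q : ℕ} {r π : ℕ → ℕ} {m : ℕ} {X' : Finset Ctr3}

/-- Sort key used by `pick3`. -/
def key3 (π : ℕ → ℕ) (x : Ctr3) : ℕ ×ₗ (ℕ ×ₗ ℕ) :=
  toLex ((π x.1 : ℕ), toLex (x.2.2, x.1))

lemma key3_le {π : ℕ → ℕ} {c z : Ctr3} :
    key3 π c ≤ key3 π z ↔ π c.1 < π z.1 ∨ (π c.1 = π z.1 ∧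
      (c.2.2 < z.2.2 ∨ (c.2.2 = z.2.2 ∧ c.1 ≤ z.1))) := by
  simp [key3, Prod.Lex.le_iff, Prod.Lex.lt_iff]

lemma pick3_eq {Z : Finset Ctr3} (h : Z.Nonempty) {c : Ctr3} (hc : c ∈ Z)
    (hm : c.2.1 = m) (hmin : ∀ z ∈ Z, key3 π c ≤ key3 π z) :
    pick3 π m Z h = c := by
  have hk : (Z.image fun x => toLex ((π x.1 : ℕ), toLex (x.2.2, x.1))).min'
      (h.image _) = key3 π c := by
    apply le_antisymm
    · exact Finset.min'_le _ _ (Finset.mem_image_of_mem _ hc)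
    · refine Finset.le_min' _ _ _ ?_
      rintro y hy
      obtain ⟨z, hz, rfl⟩ := Finset.mem_image.mp hy
      exact hmin z hz
  simp only [pick3, hk, key3, ofLex_toLex]
  exact Prod.ext rfl (Prod.ext hm.symm rfl)

lemma run3_zero (acc : Finset Ctr3) : run3 s q r π m X' 0 acc = acc := by
  simp [run3]

lemma run3_stop {acc : Finset Ctr3} (h : q ≤ acc.sum (fun x => s x.1)) (n : ℕ) :
    run3 s q r π m X' n acc = acc := by
  cases n <;> simp [run3, h]

lemma run3_subset (n : ℕ) (acc : Finset Ctr3) :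
    acc ⊆ run3 s q r π m X' n acc := by
  induction n generalizing acc with
  | zero => simp [run3]
  | succ n ih =>
    rw [run3]
    split
    · exact Finset.Subset.refl _
    · split
      · exact (Finset.subset_insert _ _).trans (ih _)
      · exact Finset.Subset.refl _

lemma run3_step {acc : Finset Ctr3} (n : ℕ)
    (hq : ¬ q ≤ acc.sum (fun x => s x.1))
    (hZ : (X'.filter fun x => x.2.1 = m ∧
      (acc.filter fun y => y.2.2 = x.2.2).card < r x.2.2 ∧
      ∀ y ∈ acc, y.1 ≠ x.1).Nonempty) {c : Ctr3}
    (hpick : pick3 π m _ hZ = c) :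
    run3 s q r π m X' (n+1) acc = run3 s q r π m X' n (insert c acc) := by
  rw [run3]
  simp only [hq, if_false, dif_pos hZ, hpick]

lemma run3_none {acc : Finset Ctr3} (n : ℕ)
    (hZ : ¬ (X'.filter fun x => x.2.1 = m ∧
      (acc.filter fun y => y.2.2 = x.2.2).card < r x.2.2 ∧
      ∀ y ∈ acc, y.1 ≠ x.1).Nonempty) :
    run3 s q r π m X' n acc = acc := by
  cases n with
  | zero => simp [run3]
  | succ n =>
    rw [run3]
    simp only [dif_neg hZ]
    split <;> rfl

end Infra
section ChatLemmas

variable {s : ℕ → ℕ} {q : ℕ} {r π : ℕ → ℕ} {m : ℕ} {X' : Finset Ctr3}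

lemma Chat3_single {c : Ctr3} (hc : c ∈ X') (hm : c.2.1 = m)
    (hr : 0 < r c.2.2) (hq0 : 0 < q) (hqc : q ≤ s c.1)
    (hmin : ∀ z ∈ X', z.2.1 = m → key3 π c ≤ key3 π z) :
    Chat3 s q r π m X' = {c} := by
  have hcZ : c ∈ X'.filter (fun x => x.2.1 = m ∧
      ((∅ : Finset Ctr3).filter fun y => y.2.2 = x.2.2).card < r x.2.2 ∧
      ∀ y ∈ (∅ : Finset Ctr3), y.1 ≠ x.1) := by
    simp only [Finset.mem_filter, Finset.filter_empty, Finset.card_empty,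
      Finset.notMem_empty, false_implies, implies_true, and_true]
    exact ⟨hc, hm, hr⟩
  have hZ : (X'.filter (fun x => x.2.1 = m ∧
      ((∅ : Finset Ctr3).filter fun y => y.2.2 = x.2.2).card < r x.2.2 ∧
      ∀ y ∈ (∅ : Finset Ctr3), y.1 ≠ x.1)).Nonempty := ⟨c, hcZ⟩
  have hpick : pick3 π m _ hZ = c := by
    refine pick3_eq hZ hcZ hm ?_
    intro z hz
    rw [Finset.mem_filter] at hz
    exact hmin z hz.1 hz.2.1
  rw [Chat3, run3_step X'.card (by simpa using Nat.not_le.mpr hq0) hZ hpick,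
    run3_stop]
  · simp
  · simpa using hqc

lemma Chat3_mem_first {c : Ctr3} (hc : c ∈ X') (hm : c.2.1 = m)
    (hr : 0 < r c.2.2) (hq0 : 0 < q)
    (hmin : ∀ z ∈ X', z.2.1 = m → key3 π c ≤ key3 π z) :
    c ∈ Chat3 s q r π m X' := by
  have hcZ : c ∈ X'.filter (fun x => x.2.1 = m ∧
      ((∅ : Finset Ctr3).filter fun y => y.2.2 = x.2.2).card < r x.2.2 ∧
      ∀ y ∈ (∅ : Finset Ctr3), y.1 ≠ x.1) := by
    simp only [Finset.mem_filter, Finset.filter_empty, Finset.card_empty,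
      Finset.notMem_empty, false_implies, implies_true, and_true]
    exact ⟨hc, hm, hr⟩
  have hZ : (X'.filter (fun x => x.2.1 = m ∧
      ((∅ : Finset Ctr3).filter fun y => y.2.2 = x.2.2).card < r x.2.2 ∧
      ∀ y ∈ (∅ : Finset Ctr3), y.1 ≠ x.1)).Nonempty := ⟨c, hcZ⟩
  have hpick : pick3 π m _ hZ = c := by
    refine pick3_eq hZ hcZ hm ?_
    intro z hz
    rw [Finset.mem_filter] at hz
    exact hmin z hz.1 hz.2.1
  rw [Chat3, run3_step X'.card (by simpa using Nat.not_le.mpr hq0) hZ hpick]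
  exact run3_subset _ _ (Finset.mem_insert_self _ _)

lemma Chat3_mem_second {c d : Ctr3} (hc : c ∈ X') (hd : d ∈ X')
    (hcm : c.2.1 = m) (hdm : d.2.1 = m) (hne : d.1 ≠ c.1)
    (hq0 : 0 < q) (hq1 : ¬ q ≤ s c.1)
    (hrc : 0 < r c.2.2) (hrd : 1 < r d.2.2)
    (hmin1 : ∀ z ∈ X', z.2.1 = m → key3 π c ≤ key3 π z)
    (hmin2 : ∀ z ∈ X', z.2.1 = m → z.1 ≠ c.1 → key3 π d ≤ key3 π z) :
    d ∈ Chat3 s q r π m X' := by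
  have hcZ : c ∈ X'.filter (fun x => x.2.1 = m ∧
      ((∅ : Finset Ctr3).filter fun y => y.2.2 = x.2.2).card < r x.2.2 ∧
      ∀ y ∈ (∅ : Finset Ctr3), y.1 ≠ x.1) := by
    simp only [Finset.mem_filter, Finset.filter_empty, Finset.card_empty,
      Finset.notMem_empty, false_implies, implies_true, and_true]
    exact ⟨hc, hcm, hrc⟩
  have hZ : (X'.filter (fun x => x.2.1 = m ∧
      ((∅ : Finset Ctr3).filter fun y => y.2.2 = x.2.2).card < r x.2.2 ∧
      ∀ y ∈ (∅ : Finset Ctr3), y.1 ≠ x.1)).Nonempty := ⟨c, hcZ⟩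
  have hpick : pick3 π m _ hZ = c := by
    refine pick3_eq hZ hcZ hcm ?_
    intro z hz
    rw [Finset.mem_filter] at hz
    exact hmin1 z hz.1 hz.2.1
  have hcard : 1 ≤ X'.card := Finset.card_pos.mpr ⟨c, hc⟩
  obtain ⟨k, hk⟩ : ∃ k, X'.card = k + 1 := ⟨X'.card - 1, by omega⟩
  rw [Chat3, hk]
  rw [run3_step (k + 1) (by simpa using Nat.not_le.mpr hq0) hZ hpick]
  -- second step
  have hdZ : d ∈ X'.filter (fun x => x.2.1 = m ∧
      (((insert c ∅ : Finset Ctr3)).filter fun y => y.2.2 = x.2.2).card < r x.2.2 ∧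
      ∀ y ∈ (insert c ∅ : Finset Ctr3), y.1 ≠ x.1) := by
    rw [Finset.mem_filter]
    refine ⟨hd, hdm, ?_, ?_⟩
    · calc ((insert c ∅ : Finset Ctr3).filter fun y => y.2.2 = d.2.2).card
          ≤ (insert c ∅ : Finset Ctr3).card := Finset.card_filter_le _ _
        _ ≤ 1 := by simp
        _ < r d.2.2 := hrd
    · intro y hy
      simp only [Finset.mem_insert, Finset.notMem_empty, or_false] at hy
      subst hy
      exact fun h => hne h.symm
  have hZ2 : (X'.filter (fun x => x.2.1 = m ∧
      (((insert c ∅ : Finset Ctr3)).filter fun y => y.2.2 = x.2.2).card < r x.2.2 ∧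
      ∀ y ∈ (insert c ∅ : Finset Ctr3), y.1 ≠ x.1)).Nonempty := ⟨d, hdZ⟩
  have hpick2 : pick3 π m _ hZ2 = d := by
    refine pick3_eq hZ2 hdZ hdm ?_
    intro z hz
    rw [Finset.mem_filter] at hz
    refine hmin2 z hz.1 hz.2.1 ?_
    have := hz.2.2.2 c (by simp)
    exact fun h => this (h.symm)
  rw [run3_step k (by simpa using hq1) hZ2 hpick2]
  exact run3_subset _ _ (Finset.mem_insert_self _ _)

lemma Chat3_empty (h : ∀ z ∈ X', z.2.1 ≠ m) :
    Chat3 s q r π m X' = ∅ := by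
  rw [Chat3]
  apply run3_none
  rw [Finset.not_nonempty_iff_eq_empty, Finset.filter_eq_empty_iff]
  intro z hz hcon
  exact h z hz hcon.1

end ChatLemmas
section Example7

def Y1F : Finset Ctr3 := {(0,0,0),(1,2,0),(2,1,0)}
def Y2F : Finset Ctr3 := {(0,1,0),(1,0,0),(2,0,0)}

variable {s : ℕ → ℕ} {Y : Finset Ctr3} {p : ℕ → Ctr3 → ℕ}

lemma r16_pos (hpos : ∀ a, 0 < s a) (m w : ℕ) : 0 < r16 s m w := by
  have := hpos 0
  unfold r16
  split <;> omega

lemma alloc_one (hY : Alloc16 s Y) {x y : Ctr3} (hx : x ∈ Y) (hy : y ∈ Y)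
    (h : x.1 = y.1) : x = y := by
  have h1 := Finset.card_le_one.mp (hY.2.1 x.1)
  exact h1 x (Finset.mem_filter.mpr ⟨hx, rfl⟩) y (Finset.mem_filter.mpr ⟨hy, h.symm⟩)

lemma blk_of (hst : Stable16 s p Y) {x : Ctr3} (h1 : x.1 < 3) (h2 : x.2.1 < 4)
    (h3 : x.2.2 < 2)
    (hch : x ∈ Chat3 s (q16 s x.2.1) (r16 s x.2.1) (π16 x.2.1) x.2.1 (insert x Y)) :
    ∃ y ∈ Y, y.1 = x.1 ∧ ¬ p x.1 x < p x.1 y := by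
  by_cases hxY : x ∈ Y
  · exact ⟨x, hxY, rfl, lt_irrefl _⟩
  · by_contra hcon
    push_neg at hcon
    exact hst.2 x h1 h2 h3 hxY (fun y hy hyx => hcon y hy hyx) hch

lemma pin_state (hst : Stable16 s p Y) {m : ℕ} {c : Ctr3}
    (hch : Chat3 s (q16 s m) (r16 s m) (π16 m) m Y = {c}) :
    ∀ u ∈ Y, u.2.1 = m → u = c := by
  intro u hu hum
  have h1 := hst.1 m
  rw [hch] at h1
  have h2 : u ∈ ({c} : Finset Ctr3) := h1 ▸ Finset.mem_filter.mpr ⟨hu, hum⟩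
  simpa using h2

/-- `x₈` is always chosen at `m₂` when added. -/
lemma chat_x8m (hpos : ∀ a, 0 < s a)
    (hB : ∀ z ∈ Y, z.1 < 3 ∧ z.2.1 < 4 ∧ z.2.2 < 2) :
    ((2,1,0) : Ctr3) ∈ Chat3 s (q16 s 1) (r16 s 1) (π16 1) 1 (insert (2,1,0) Y) := by
  refine Chat3_mem_first (by simp) rfl (by simp [r16]) (by simp [q16]) ?_
  intro z hz hzm
  rcases Finset.mem_insert.mp hz with rfl | hzY
  · exact le_refl _
  · obtain ⟨h1, h2, h3⟩ := hB z hzY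
    rw [key3_le]
    simp [π16]
    omega

/-- `x₃` is always chosen at `m₃` when added. -/
lemma chat_x3m (hpos : ∀ a, 0 < s a) :
    ((0,2,0) : Ctr3) ∈ Chat3 s (q16 s 2) (r16 s 2) (π16 2) 2 (insert (0,2,0) Y) := by
  refine Chat3_mem_first (by simp) rfl (by simp [r16]) (by simp [q16]) ?_
  intro z hz hzm
  rw [key3_le]
  simp [π16]
  omega

/-- `x₂` is always chosen at `m₁` when added, and fills the quota. -/
lemma chat_x2m (hpos : ∀ a, 0 < s a) :
    Chat3 s (q16 s 0) (r16 s 0) (π16 0) 0 (insert (0,0,0) Y) = {(0,0,0)} := by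
  refine Chat3_single (by simp) rfl (by simp [r16]) ?_ ?_ ?_
  · simpa [q16] using hpos 0
  · simp [q16]
  · intro z hz hzm
    rw [key3_le]
    simp [π16]
    omega

end Example7
section Example7b

variable {s : ℕ → ℕ} {Y : Finset Ctr3} {p : ℕ → Ctr3 → ℕ}

/-- `x₄` is chosen at `m₂` when added, provided `a₃` is not present at `m₂`. -/
lemma chat_x4m (hpos : ∀ a, 0 < s a)
    (hB : ∀ z ∈ Y, z.1 < 3 ∧ z.2.1 < 4 ∧ z.2.2 < 2)
    (h2 : ∀ z ∈ Y, z.2.1 = 1 → z.1 ≠ 2) :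
    ((1,1,0) : Ctr3) ∈ Chat3 s (q16 s 1) (r16 s 1) (π16 1) 1 (insert (1,1,0) Y) := by
  refine Chat3_mem_first (by simp) rfl (by simp [r16]) (by simp [q16]) ?_
  intro z hz hzm
  rcases Finset.mem_insert.mp hz with rfl | hzY
  · exact le_refl _
  · obtain ⟨h1, _, h3⟩ := hB z hzY
    have h4 := h2 z hzY hzm
    rw [key3_le]
    simp [π16]
    omega

/-- `x₆` is chosen at `m₃` when added, provided `a₁` is not present at `m₃`. -/
lemma chat_x6m (hpos : ∀ a, 0 < s a)
    (hB : ∀ z ∈ Y, z.1 < 3 ∧ z.2.1 < 4 ∧ z.2.2 < 2)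
    (h0 : ∀ z ∈ Y, z.2.1 = 2 → z.1 ≠ 0) :
    ((1,2,0) : Ctr3) ∈ Chat3 s (q16 s 2) (r16 s 2) (π16 2) 2 (insert (1,2,0) Y) := by
  refine Chat3_mem_first (by simp) rfl (by simp [r16]) (by simp [q16]) ?_
  intro z hz hzm
  rcases Finset.mem_insert.mp hz with rfl | hzY
  · exact le_refl _
  · obtain ⟨h1, _, h3⟩ := hB z hzY
    have h4 := h0 z hzY hzm
    rw [key3_le]
    simp [π16]
    omega

/-- `x₅` is chosen at `m₁` when added, provided `a₁` is not present at `m₁`. -/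
lemma chat_x5m (hpos : ∀ a, 0 < s a)
    (hB : ∀ z ∈ Y, z.1 < 3 ∧ z.2.1 < 4 ∧ z.2.2 < 2)
    (h0 : ∀ z ∈ Y, z.2.1 = 0 → z.1 ≠ 0) :
    ((1,0,0) : Ctr3) ∈ Chat3 s (q16 s 0) (r16 s 0) (π16 0) 0 (insert (1,0,0) Y) := by
  refine Chat3_mem_first (by simp) rfl (by simp [r16]) (by simpa [q16] using hpos 0) ?_
  intro z hz hzm
  rcases Finset.mem_insert.mp hz with rfl | hzY
  · exact le_refl _
  · obtain ⟨h1, _, h3⟩ := hB z hzY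
    have h4 := h0 z hzY hzm
    rw [key3_le]
    simp [π16]
    omega

/-- `x₇` is chosen (second) at `m₁` when added, provided `a₁` is not present
at `m₁` and `a₂` holds `x₅`. -/
lemma chat_x7m (hpos : ∀ a, 0 < s a) (h01 : s 1 < s 0)
    (hB : ∀ z ∈ Y, z.1 < 3 ∧ z.2.1 < 4 ∧ z.2.2 < 2)
    (hx5 : ((1,0,0) : Ctr3) ∈ Y)
    (hone : ∀ x ∈ Y, ∀ y ∈ Y, x.1 = y.1 → x = y)
    (h0 : ∀ z ∈ Y, z.2.1 = 0 → z.1 ≠ 0) :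
    ((2,0,0) : Ctr3) ∈ Chat3 s (q16 s 0) (r16 s 0) (π16 0) 0 (insert (2,0,0) Y) := by
  refine Chat3_mem_second (c := (1,0,0)) (Finset.mem_insert_of_mem hx5) (by simp) rfl rfl
    (by norm_num) (by simpa [q16] using hpos 0)
    (by simpa [q16] using Nat.not_le.mpr h01) (by simp [r16]) (by simp [r16]) ?_ ?_
  · intro z hz hzm
    rcases Finset.mem_insert.mp hz with rfl | hzY
    · rw [key3_le]; simp [π16]
    · obtain ⟨h1, _, h3⟩ := hB z hzY
      have h4 := h0 z hzY hzm
      by_cases hz1 : z.1 = 1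
      · have := hone z hzY _ hx5 (by simpa using hz1)
        subst this
        exact le_refl _
      · rw [key3_le]; simp [π16]; omega
  · intro z hz hzm hz1
    rcases Finset.mem_insert.mp hz with rfl | hzY
    · exact le_refl _
    · obtain ⟨h1, _, h3⟩ := hB z hzY
      have h4 := h0 z hzY hzm
      rw [key3_le]
      simp [π16]
      omega

/-- If some contract of asylum seeker `a` sits at a state where `a` has top
priority (and nobody with higher priority is present), the state's choice is
exactly that contract: generic single-pin for `m₂` with an `a₃`-contract. -/
lemma pin_m2_a3 (hpos : ∀ a, 0 < s a) (hY : Alloc16 s Y) {z : Ctr3}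
    (hz : z ∈ Y) (hzm : z.2.1 = 1) (hz2 : z.1 = 2) :
    Chat3 s (q16 s 1) (r16 s 1) (π16 1) 1 Y = {z} := by
  refine Chat3_single hz hzm (r16_pos hpos 1 z.2.2) (by simp [q16])
    (by simp [q16, hz2]; exact hpos 2) ?_
  intro u hu hum
  obtain ⟨h1, _, h3⟩ := hY.1 u hu
  by_cases hu2 : u.1 = 2
  · rw [alloc_one hY hu hz (by rw [hu2, hz2])]
  · rw [key3_le]
    simp [π16]
    omega

/-- Generic single-pin for `m₂` with an `a₂`-contract, when `a₃` absent. -/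
lemma pin_m2_a2 (hpos : ∀ a, 0 < s a) (hY : Alloc16 s Y) {z : Ctr3}
    (hz : z ∈ Y) (hzm : z.2.1 = 1) (hz2 : z.1 = 1)
    (h2 : ∀ u ∈ Y, u.2.1 = 1 → u.1 ≠ 2) :
    Chat3 s (q16 s 1) (r16 s 1) (π16 1) 1 Y = {z} := by
  refine Chat3_single hz hzm (r16_pos hpos 1 z.2.2) (by simp [q16])
    (by simp [q16, hz2]; exact hpos 1) ?_
  intro u hu hum
  obtain ⟨h1, _, h3⟩ := hY.1 u hu
  by_cases hu2 : u.1 = 1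
  · rw [alloc_one hY hu hz (by rw [hu2, hz2])]
  · have := h2 u hu hum
    rw [key3_le]
    simp [π16]
    omega

/-- Pin at `m₁` when `a₁` holds `x₂ = (0,0,0)`. -/
lemma pin_m0_x2 (hpos : ∀ a, 0 < s a)
    (hz : ((0,0,0) : Ctr3) ∈ Y) :
    Chat3 s (q16 s 0) (r16 s 0) (π16 0) 0 Y = {(0,0,0)} := by
  refine Chat3_single hz rfl (by simp [r16]) (by simpa [q16] using hpos 0)
    (by simp [q16]) ?_
  intro u hu hum
  rw [key3_le]
  simp [π16]
  omega

/-- Pin at `m₂` when `a₃` holds `x₈ = (2,1,0)`. -/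
lemma pin_m1_x8 (hpos : ∀ a, 0 < s a) (hY : Alloc16 s Y)
    (hz : ((2,1,0) : Ctr3) ∈ Y) :
    Chat3 s (q16 s 1) (r16 s 1) (π16 1) 1 Y = {(2,1,0)} :=
  pin_m2_a3 hpos hY hz rfl rfl

end Example7b
section Example7c

variable {s : ℕ → ℕ} {Y : Finset Ctr3} {p : ℕ → Ctr3 → ℕ}

lemma alloc_Y1 (hpos : ∀ a, 0 < s a) : Alloc16 s Y1F := by
  refine ⟨by decide, ?_, ?_⟩
  · intro a
    rw [Finset.card_le_one]
    intro x hx y hy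
    rw [Finset.mem_filter] at hx hy
    obtain ⟨hx1, hx2⟩ := hx
    obtain ⟨hy1, hy2⟩ := hy
    simp only [Y1F, Finset.mem_insert, Finset.mem_singleton] at hx1 hy1
    rcases hx1 with rfl | rfl | rfl <;> rcases hy1 with rfl | rfl | rfl <;>
      first | rfl | (exfalso; simp at hx2 hy2; omega)
  · intro m w
    have hr := r16_pos hpos m w
    refine le_trans ?_ hr
    rw [Finset.card_le_one]
    intro x hx y hy
    rw [Finset.mem_filter] at hx hy
    obtain ⟨hx1, hx2⟩ := hx
    obtain ⟨hy1, hy2⟩ := hy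
    simp only [Y1F, Finset.mem_insert, Finset.mem_singleton] at hx1 hy1
    rcases hx1 with rfl | rfl | rfl <;> rcases hy1 with rfl | rfl | rfl <;>
      first | rfl | (exfalso; simp at hx2 hy2; omega)

lemma alloc_Y2 (hpos : ∀ a, 0 < s a) : Alloc16 s Y2F := by
  refine ⟨by decide, ?_, ?_⟩
  · intro a
    rw [Finset.card_le_one]
    intro x hx y hy
    rw [Finset.mem_filter] at hx hy
    obtain ⟨hx1, hx2⟩ := hx
    obtain ⟨hy1, hy2⟩ := hy
    simp only [Y2F, Finset.mem_insert, Finset.mem_singleton] at hx1 hy1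
    rcases hx1 with rfl | rfl | rfl <;> rcases hy1 with rfl | rfl | rfl <;>
      first | rfl | (exfalso; simp at hx2 hy2; omega)
  · intro m w
    by_cases hw : w = 0
    · subst hw
      by_cases hm : m = 0
      · subst hm
        have hf : (Y2F.filter fun x => x.2.1 = 0 ∧ x.2.2 = 0)
            = {(1,0,0),(2,0,0)} := by decide
        rw [hf]
        simp [r16]
      · refine le_trans ?_ (r16_pos hpos m 0)
        rw [Finset.card_le_one]
        intro x hx y hy
        rw [Finset.mem_filter] at hx hy
        obtain ⟨hx1, hx2⟩ := hx
        obtain ⟨hy1, hy2⟩ := hy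
        simp only [Y2F, Finset.mem_insert, Finset.mem_singleton] at hx1 hy1
        rcases hx1 with rfl | rfl | rfl <;> rcases hy1 with rfl | rfl | rfl <;>
          first | rfl | (exfalso; simp at hx2 hy2; omega)
    · have hf : (Y2F.filter fun x => x.2.1 = m ∧ x.2.2 = w) = ∅ := by
        rw [Finset.filter_eq_empty_iff]
        intro z hz
        simp only [Y2F, Finset.mem_insert, Finset.mem_singleton] at hz
        rintro ⟨h1, h2⟩
        rcases hz with rfl | rfl | rfl <;> simp at h2 <;> omega
      rw [hf]
      simp

/-- Choice of `m₃` on `Y1F`. -/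
lemma chatY1_m2 (hpos : ∀ a, 0 < s a) :
    Chat3 s (q16 s 2) (r16 s 2) (π16 2) 2 Y1F = {(1,2,0)} := by
  refine Chat3_single (by simp [Y1F]) rfl (by simp [r16]) (by simp [q16])
    (by simp [q16]; exact hpos 1) ?_
  intro z hz hzm
  simp only [Y1F, Finset.mem_insert, Finset.mem_singleton] at hz
  rcases hz with rfl | rfl | rfl <;>
    first
      | exact le_refl _
      | exact absurd hzm (by decide)
      | (rw [key3_le]; simp [π16])

/-- Choice of `m₂` on `insert x₁ Y1F`. -/
lemma chat_insx1_Y1 (hpos : ∀ a, 0 < s a) :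
    Chat3 s (q16 s 1) (r16 s 1) (π16 1) 1 (insert (0,1,0) Y1F) = {(2,1,0)} := by
  refine Chat3_single (by simp [Y1F]) rfl (by simp [r16]) (by simp [q16])
    (by simp [q16]; exact hpos 2) ?_
  intro z hz hzm
  simp only [Y1F, Finset.mem_insert, Finset.mem_singleton] at hz
  rcases hz with rfl | rfl | rfl | rfl <;>
    first
      | exact le_refl _
      | exact absurd hzm (by decide)
      | (rw [key3_le]; simp [π16])

/-- Choice of `m₂` on `insert x₄ Y1F`. -/
lemma chat_insx4_Y1 (hpos : ∀ a, 0 < s a) :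
    Chat3 s (q16 s 1) (r16 s 1) (π16 1) 1 (insert (1,1,0) Y1F) = {(2,1,0)} := by
  refine Chat3_single (by simp [Y1F]) rfl (by simp [r16]) (by simp [q16])
    (by simp [q16]; exact hpos 2) ?_
  intro z hz hzm
  simp only [Y1F, Finset.mem_insert, Finset.mem_singleton] at hz
  rcases hz with rfl | rfl | rfl | rfl <;>
    first
      | exact le_refl _
      | exact absurd hzm (by decide)
      | (rw [key3_le]; simp [π16])

/-- Choice of `m₂` on `Y2F`. -/
lemma chatY2_m1 (hpos : ∀ a, 0 < s a) :
    Chat3 s (q16 s 1) (r16 s 1) (π16 1) 1 Y2F = {(0,1,0)} := by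
  refine Chat3_single (by simp [Y2F]) rfl (by simp [r16]) (by simp [q16])
    (by simp [q16]; exact hpos 0) ?_
  intro z hz hzm
  simp only [Y2F, Finset.mem_insert, Finset.mem_singleton] at hz
  rcases hz with rfl | rfl | rfl <;>
    first
      | exact le_refl _
      | exact absurd hzm (by decide)
      | (rw [key3_le]; simp [π16])

/-- Choice of `m₁` on `Y2F`: the two-contract set. -/
lemma chatY2_m0 (hpos : ∀ a, 0 < s a) (h01 : s 1 < s 0) :
    Chat3 s (q16 s 0) (r16 s 0) (π16 0) 0 Y2F = {(1,0,0),(2,0,0)} := by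
  rw [Chat3]
  have hq0 : ¬ q16 s 0 ≤ (∅ : Finset Ctr3).sum (fun x => s x.1) := by
    have := hpos 0
    simp [q16]
    omega
  have hm1 : ((1,0,0) : Ctr3) ∈ Y2F.filter (fun x => x.2.1 = 0 ∧
      ((∅ : Finset Ctr3).filter fun y => y.2.2 = x.2.2).card < r16 s 0 x.2.2 ∧
      ∀ y ∈ (∅ : Finset Ctr3), y.1 ≠ x.1) := by
    simp [Y2F, r16]
  have hZ1 : (Y2F.filter (fun x => x.2.1 = 0 ∧
      ((∅ : Finset Ctr3).filter fun y => y.2.2 = x.2.2).card < r16 s 0 x.2.2 ∧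
      ∀ y ∈ (∅ : Finset Ctr3), y.1 ≠ x.1)).Nonempty := ⟨_, hm1⟩
  have hpick1 : pick3 (π16 0) 0 _ hZ1 = ((1,0,0) : Ctr3) := by
    refine pick3_eq hZ1 hm1 rfl ?_
    intro z hz
    rw [Finset.mem_filter] at hz
    obtain ⟨hz1, hzm, -⟩ := hz
    simp only [Y2F, Finset.mem_insert, Finset.mem_singleton] at hz1
    rcases hz1 with rfl | rfl | rfl <;>
      first
        | exact le_refl _
        | exact absurd hzm (by decide)
        | (rw [key3_le]; simp [π16])
  rw [run3_step Y2F.card hq0 hZ1 hpick1]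
  have hc3 : Y2F.card = 2 + 1 := by decide
  rw [hc3]
  have hq1 : ¬ q16 s 0 ≤ (insert ((1,0,0) : Ctr3) (∅ : Finset Ctr3)).sum (fun x => s x.1) := by
    simp only [Finset.sum_insert (Finset.notMem_empty _), Finset.sum_empty]
    simpa [q16] using Nat.not_le.mpr h01
  have hm2 : ((2,0,0) : Ctr3) ∈ Y2F.filter (fun x => x.2.1 = 0 ∧
      ((insert ((1,0,0) : Ctr3) (∅ : Finset Ctr3)).filter fun y => y.2.2 = x.2.2).card < r16 s 0 x.2.2 ∧
      ∀ y ∈ (insert ((1,0,0) : Ctr3) (∅ : Finset Ctr3)), y.1 ≠ x.1) := by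
    simp [Y2F, r16, Finset.filter_singleton]
  have hZ2 : (Y2F.filter (fun x => x.2.1 = 0 ∧
      ((insert ((1,0,0) : Ctr3) (∅ : Finset Ctr3)).filter fun y => y.2.2 = x.2.2).card < r16 s 0 x.2.2 ∧
      ∀ y ∈ (insert ((1,0,0) : Ctr3) (∅ : Finset Ctr3)), y.1 ≠ x.1)).Nonempty := ⟨_, hm2⟩
  have hpick2 : pick3 (π16 0) 0 _ hZ2 = ((2,0,0) : Ctr3) := by
    refine pick3_eq hZ2 hm2 rfl ?_
    intro z hz
    rw [Finset.mem_filter] at hz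
    obtain ⟨hz1, hzm, -, hznew⟩ := hz
    simp only [Y2F, Finset.mem_insert, Finset.mem_singleton] at hz1
    rcases hz1 with rfl | rfl | rfl
    · simp at hzm
    · exact absurd rfl (hznew (1,0,0) (by simp))
    · exact le_refl _
  rw [run3_step 2 hq1 hZ2 hpick2]
  have hfin : (insert ((2,0,0) : Ctr3) (insert ((1,0,0) : Ctr3) (∅ : Finset Ctr3)))
      = ({(1,0,0),(2,0,0)} : Finset Ctr3) := by decide
  by_cases hq2 : q16 s 0 ≤ (insert ((2,0,0) : Ctr3) (insert ((1,0,0) : Ctr3) (∅ : Finset Ctr3))).sum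
      (fun x => s x.1)
  · rw [run3_stop hq2, hfin]
  · rw [run3_none 2 ?_, hfin]
    rw [Finset.not_nonempty_iff_eq_empty, Finset.filter_eq_empty_iff]
    intro z hz1
    simp only [Y2F, Finset.mem_insert, Finset.mem_singleton] at hz1
    rintro ⟨hzm, -, hznew⟩
    rcases hz1 with rfl | rfl | rfl
    · simp at hzm
    · exact hznew (1,0,0) (by simp) rfl
    · exact hznew (2,0,0) (by simp) rfl

end Example7c
section Example7d

variable {s : ℕ → ℕ} {Y : Finset Ctr3} {p : ℕ → Ctr3 → ℕ}

lemma stable_Y1 (hpos : ∀ a, 0 < s a)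
    (pref : ℕ → Ctr3 → ℕ)
    (h1b : ∀ z : Ctr3, z.1 = 0 → z ≠ (0, 1, 0) → z ≠ (0, 0, 0) →
      pref 0 (0, 0, 0) < pref 0 z)
    (h2c : ∀ z : Ctr3, z.1 = 1 → z ≠ (1, 1, 0) → z ≠ (1, 0, 0) →
      z ≠ (1, 2, 0) → pref 1 (1, 2, 0) < pref 1 z)
    (h3b : ∀ z : Ctr3, z.1 = 2 → z ≠ (2, 0, 0) → z ≠ (2, 1, 0) →
      pref 2 (2, 1, 0) < pref 2 z) :
    Stable16 s pref Y1F := by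
  constructor
  · intro m
    by_cases hm0 : m = 0
    · subst hm0
      rw [pin_m0_x2 hpos (by simp [Y1F])]
      decide
    by_cases hm1 : m = 1
    · subst hm1
      rw [pin_m1_x8 hpos (alloc_Y1 hpos) (by simp [Y1F])]
      decide
    by_cases hm2 : m = 2
    · subst hm2
      rw [chatY1_m2 hpos]
      decide
    · rw [Chat3_empty ?_]
      · symm
        rw [Finset.filter_eq_empty_iff]
        intro z hz
        simp only [Y1F, Finset.mem_insert, Finset.mem_singleton] at hz
        rcases hz with rfl | rfl | rfl <;> simpa using by omega
      · intro z hz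
        simp only [Y1F, Finset.mem_insert, Finset.mem_singleton] at hz
        rcases hz with rfl | rfl | rfl <;> simpa using by omega
  · rintro ⟨a, mm, w⟩ ha hm hw hxY hpref
    have ha' : a < 3 := ha
    interval_cases a
    · have h2 : pref 0 (0, mm, w) < pref 0 (0,0,0) :=
        hpref (0,0,0) (by simp [Y1F]) rfl
      by_cases hx1 : ((0, mm, w) : Ctr3) = (0,1,0)
      · obtain ⟨rfl, rfl⟩ : mm = 1 ∧ w = 0 := by
          simpa [Prod.ext_iff] using hx1
        show ((0,1,0) : Ctr3) ∉ Chat3 s (q16 s 1) (r16 s 1) (π16 1) 1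
          (insert (0,1,0) Y1F)
        rw [chat_insx1_Y1 hpos]
        decide
      · have h3 := h1b (0, mm, w) rfl hx1
          (fun h => hxY (by rw [h]; simp [Y1F]))
        omega
    · have h2 : pref 1 (1, mm, w) < pref 1 (1,2,0) :=
        hpref (1,2,0) (by simp [Y1F]) rfl
      by_cases hx4 : ((1, mm, w) : Ctr3) = (1,1,0)
      · obtain ⟨rfl, rfl⟩ : mm = 1 ∧ w = 0 := by
          simpa [Prod.ext_iff] using hx4
        show ((1,1,0) : Ctr3) ∉ Chat3 s (q16 s 1) (r16 s 1) (π16 1) 1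
          (insert (1,1,0) Y1F)
        rw [chat_insx4_Y1 hpos]
        decide
      by_cases hx5 : ((1, mm, w) : Ctr3) = (1,0,0)
      · obtain ⟨rfl, rfl⟩ : mm = 0 ∧ w = 0 := by
          simpa [Prod.ext_iff] using hx5
        show ((1,0,0) : Ctr3) ∉ Chat3 s (q16 s 0) (r16 s 0) (π16 0) 0
          (insert (1,0,0) Y1F)
        rw [pin_m0_x2 hpos (by simp [Y1F])]
        decide
      · have h3 := h2c (1, mm, w) rfl hx4 hx5
          (fun h => hxY (by rw [h]; simp [Y1F]))
        omega
    · have h2 : pref 2 (2, mm, w) < pref 2 (2,1,0) :=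
        hpref (2,1,0) (by simp [Y1F]) rfl
      by_cases hx7 : ((2, mm, w) : Ctr3) = (2,0,0)
      · obtain ⟨rfl, rfl⟩ : mm = 0 ∧ w = 0 := by
          simpa [Prod.ext_iff] using hx7
        show ((2,0,0) : Ctr3) ∉ Chat3 s (q16 s 0) (r16 s 0) (π16 0) 0
          (insert (2,0,0) Y1F)
        rw [pin_m0_x2 hpos (by simp [Y1F])]
        decide
      · have h3 := h3b (2, mm, w) rfl hx7
          (fun h => hxY (by rw [h]; simp [Y1F]))
        omega

lemma stable_Y2 (hpos : ∀ a, 0 < s a) (h01 : s 1 < s 0)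
    (ha1 : ∀ z : Ctr3, z.1 = 0 → z ≠ (0, 1, 0) → p 0 (0, 1, 0) < p 0 z)
    (ha2 : ∀ z : Ctr3, z.1 = 1 → z ≠ (1, 0, 0) → p 1 (1, 0, 0) < p 1 z)
    (ha3 : ∀ z : Ctr3, z.1 = 2 → z ≠ (2, 0, 0) → p 2 (2, 0, 0) < p 2 z) :
    Stable16 s p Y2F := by
  constructor
  · intro m
    by_cases hm0 : m = 0
    · subst hm0
      rw [chatY2_m0 hpos h01]
      decide
    by_cases hm1 : m = 1
    · subst hm1
      rw [chatY2_m1 hpos]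
      decide
    · rw [Chat3_empty ?_]
      · symm
        rw [Finset.filter_eq_empty_iff]
        intro z hz
        simp only [Y2F, Finset.mem_insert, Finset.mem_singleton] at hz
        rcases hz with rfl | rfl | rfl <;> simpa using by omega
      · intro z hz
        simp only [Y2F, Finset.mem_insert, Finset.mem_singleton] at hz
        rcases hz with rfl | rfl | rfl <;> simpa using by omega
  · rintro ⟨a, mm, w⟩ ha hm hw hxY hpref
    have ha' : a < 3 := ha
    interval_cases a
    · have h2 : p 0 (0, mm, w) < p 0 (0,1,0) :=
        hpref (0,1,0) (by simp [Y2F]) rfl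
      have h3 := ha1 (0, mm, w) rfl
        (fun h => hxY (by rw [h]; simp [Y2F]))
      omega
    · have h2 : p 1 (1, mm, w) < p 1 (1,0,0) :=
        hpref (1,0,0) (by simp [Y2F]) rfl
      have h3 := ha2 (1, mm, w) rfl
        (fun h => hxY (by rw [h]; simp [Y2F]))
      omega
    · have h2 : p 2 (2, mm, w) < p 2 (2,0,0) :=
        hpref (2,0,0) (by simp [Y2F]) rfl
      have h3 := ha3 (2, mm, w) rfl
        (fun h => hxY (by rw [h]; simp [Y2F]))
      omega

end Example7d
section Example7e

variable {s : ℕ → ℕ} {Y : Finset Ctr3} {p : ℕ → Ctr3 → ℕ}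

/-- Any stable allocation where `a₁` holds `x₂` and `a₂`,`a₃` are as pinned is `Y1F`. -/
lemma uniq_P (hpos : ∀ a, 0 < s a) (h01 : s 1 < s 0)
    (h1b' : ∀ z : Ctr3, z.1 = 0 → z ≠ (0,1,0) → z ≠ (0,0,0) → p 0 (0,0,0) < p 0 z)
    (h2a' : ∀ z : Ctr3, z.1 = 1 → z ≠ (1,1,0) → p 1 (1,1,0) < p 1 z)
    (h2c' : ∀ z : Ctr3, z.1 = 1 → z ≠ (1,1,0) → z ≠ (1,0,0) → z ≠ (1,2,0) →
      p 1 (1,2,0) < p 1 z)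
    (h3b' : ∀ z : Ctr3, z.1 = 2 → z ≠ (2,0,0) → z ≠ (2,1,0) → p 2 (2,1,0) < p 2 z)
    (hY : Alloc16 s Y) (hst : Stable16 s p Y) : Y = Y1F := by
  have hB := hY.1
  have hone : ∀ x ∈ Y, ∀ y ∈ Y, x.1 = y.1 → x = y :=
    fun x hx y hy h => alloc_one hY hx hy h
  -- a1 holds x1 or x2
  obtain ⟨y0, hy0Y, hy01, hy02⟩ := blk_of hst (x := ((0,0,0) : Ctr3))
    (by norm_num) (by norm_num) (by norm_num) (by rw [chat_x2m hpos]; simp)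
  have hy0 : y0 = (0,1,0) ∨ y0 = (0,0,0) := by
    by_cases h1 : y0 = (0,1,0)
    · exact Or.inl h1
    by_cases h2 : y0 = (0,0,0)
    · exact Or.inr h2
    exact absurd (h1b' y0 hy01 h1 h2) hy02
  rcases hy0 with rfl | rfl
  · -- a1 = x1 : contradiction
    exfalso
    have hno3 : ∀ z ∈ Y, z.2.1 = 1 → z.1 ≠ 2 := by
      intro z hz hzm hz2
      have hpin := pin_m2_a3 hpos hY hz hzm hz2
      have hco := pin_state hst hpin (0,1,0) hy0Y rfl
      rw [← hco] at hz2
      simp at hz2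
    obtain ⟨y1, hy1Y, hy11, hy12⟩ := blk_of hst (x := ((1,1,0) : Ctr3))
      (by norm_num) (by norm_num) (by norm_num) (chat_x4m hpos hB hno3)
    have hy1 : y1 = (1,1,0) := by
      by_contra hne
      exact hy12 (h2a' y1 hy11 hne)
    subst hy1
    have hpin := pin_m2_a2 hpos hY hy1Y rfl rfl hno3
    have hco := pin_state hst hpin (0,1,0) hy0Y rfl
    simp [Prod.ext_iff] at hco
  · -- a1 = x2
    have hpin0 := pin_m0_x2 hpos hy0Y
    have hm0 := pin_state hst hpin0
    -- a3 holds x8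
    obtain ⟨y2, hy2Y, hy21, hy22⟩ := blk_of hst (x := ((2,1,0) : Ctr3))
      (by norm_num) (by norm_num) (by norm_num) (chat_x8m hpos hB)
    have hy2 : y2 = (2,0,0) ∨ y2 = (2,1,0) := by
      by_cases h1 : y2 = (2,0,0)
      · exact Or.inl h1
      by_cases h2 : y2 = (2,1,0)
      · exact Or.inr h2
      exact absurd (h3b' y2 hy21 h1 h2) hy22
    rcases hy2 with rfl | rfl
    · exfalso
      have := hm0 (2,0,0) hy2Y rfl
      simp [Prod.ext_iff] at this
    have hpin1 := pin_m1_x8 hpos hY hy2Y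
    have hm1 := pin_state hst hpin1
    -- a2 holds x6
    have hno0m2 : ∀ z ∈ Y, z.2.1 = 2 → z.1 ≠ 0 := by
      intro z hz hzm hz0
      have := hone z hz (0,0,0) hy0Y hz0
      rw [this] at hzm
      simp at hzm
    obtain ⟨y1, hy1Y, hy11, hy12⟩ := blk_of hst (x := ((1,2,0) : Ctr3))
      (by norm_num) (by norm_num) (by norm_num) (chat_x6m hpos hB hno0m2)
    have hy1 : y1 = (1,1,0) ∨ y1 = (1,0,0) ∨ y1 = (1,2,0) := by
      by_cases h1 : y1 = (1,1,0)
      · exact Or.inl h1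
      by_cases h2 : y1 = (1,0,0)
      · exact Or.inr (Or.inl h2)
      by_cases h3 : y1 = (1,2,0)
      · exact Or.inr (Or.inr h3)
      exact absurd (h2c' y1 hy11 h1 h2 h3) hy12
    rcases hy1 with rfl | rfl | rfl
    · exfalso
      have := hm1 (1,1,0) hy1Y rfl
      simp [Prod.ext_iff] at this
    · exfalso
      have := hm0 (1,0,0) hy1Y rfl
      simp [Prod.ext_iff] at this
    -- conclude
    apply Finset.Subset.antisymm
    · intro z hz
      have hb := hB z hz
      have h3 : z.1 = 0 ∨ z.1 = 1 ∨ z.1 = 2 := by omega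
      rcases h3 with h | h | h
      · rw [hone z hz (0,0,0) hy0Y h]; simp [Y1F]
      · rw [hone z hz (1,2,0) hy1Y h]; simp [Y1F]
      · rw [hone z hz (2,1,0) hy2Y h]; simp [Y1F]
    · intro z hz
      simp only [Y1F, Finset.mem_insert, Finset.mem_singleton] at hz
      rcases hz with rfl | rfl | rfl <;> assumption

/-- Uniqueness up to two allocations under the profile where `a₂` misreports. -/
lemma uniq_P' (hpos : ∀ a, 0 < s a) (h01 : s 1 < s 0)
    (h1b' : ∀ z : Ctr3, z.1 = 0 → z ≠ (0,1,0) → z ≠ (0,0,0) → p 0 (0,0,0) < p 0 z)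
    (k2a' : ∀ z : Ctr3, z.1 = 1 → z ≠ (1,0,0) → p 1 (1,0,0) < p 1 z)
    (k2b' : ∀ z : Ctr3, z.1 = 1 → z ≠ (1,0,0) → z ≠ (1,2,0) → p 1 (1,2,0) < p 1 z)
    (h3b' : ∀ z : Ctr3, z.1 = 2 → z ≠ (2,0,0) → z ≠ (2,1,0) → p 2 (2,1,0) < p 2 z)
    (hY : Alloc16 s Y) (hst : Stable16 s p Y) : Y = Y1F ∨ Y = Y2F := by
  have hB := hY.1
  have hone : ∀ x ∈ Y, ∀ y ∈ Y, x.1 = y.1 → x = y :=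
    fun x hx y hy h => alloc_one hY hx hy h
  obtain ⟨y0, hy0Y, hy01, hy02⟩ := blk_of hst (x := ((0,0,0) : Ctr3))
    (by norm_num) (by norm_num) (by norm_num) (by rw [chat_x2m hpos]; simp)
  have hy0 : y0 = (0,1,0) ∨ y0 = (0,0,0) := by
    by_cases h1 : y0 = (0,1,0)
    · exact Or.inl h1
    by_cases h2 : y0 = (0,0,0)
    · exact Or.inr h2
    exact absurd (h1b' y0 hy01 h1 h2) hy02
  rcases hy0 with rfl | rfl
  · -- a1 = x1 : the allocation is Y2F
    right
    have hno3 : ∀ z ∈ Y, z.2.1 = 1 → z.1 ≠ 2 := by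
      intro z hz hzm hz2
      have hpin := pin_m2_a3 hpos hY hz hzm hz2
      have hco := pin_state hst hpin (0,1,0) hy0Y rfl
      rw [← hco] at hz2
      simp at hz2
    -- a3 holds x7
    obtain ⟨y2, hy2Y, hy21, hy22⟩ := blk_of hst (x := ((2,1,0) : Ctr3))
      (by norm_num) (by norm_num) (by norm_num) (chat_x8m hpos hB)
    have hy2 : y2 = (2,0,0) := by
      by_cases h1 : y2 = (2,0,0)
      · exact h1
      by_cases h2 : y2 = (2,1,0)
      · exact absurd (by rw [h2] : y2.1 = 2) (by rw [h2]; exact fun _ => hno3 y2 hy2Y (by rw [h2]) (by rw [h2]))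
      exact absurd (h3b' y2 hy21 h1 h2) hy22
    subst hy2
    -- a1 not at m1
    have hno0m0 : ∀ z ∈ Y, z.2.1 = 0 → z.1 ≠ 0 := by
      intro z hz hzm hz0
      have := hone z hz (0,1,0) hy0Y hz0
      rw [this] at hzm
      simp at hzm
    -- a2 holds x5
    obtain ⟨y1, hy1Y, hy11, hy12⟩ := blk_of hst (x := ((1,0,0) : Ctr3))
      (by norm_num) (by norm_num) (by norm_num) (chat_x5m hpos hB hno0m0)
    have hy1 : y1 = (1,0,0) := by
      by_contra hne
      exact hy12 (k2a' y1 hy11 hne)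
    subst hy1
    apply Finset.Subset.antisymm
    · intro z hz
      have hb := hB z hz
      have h3 : z.1 = 0 ∨ z.1 = 1 ∨ z.1 = 2 := by omega
      rcases h3 with h | h | h
      · rw [hone z hz (0,1,0) hy0Y h]; simp [Y2F]
      · rw [hone z hz (1,0,0) hy1Y h]; simp [Y2F]
      · rw [hone z hz (2,0,0) hy2Y h]; simp [Y2F]
    · intro z hz
      simp only [Y2F, Finset.mem_insert, Finset.mem_singleton] at hz
      rcases hz with rfl | rfl | rfl <;> assumption
  · -- a1 = x2 : the allocation is Y1F
    left
    have hpin0 := pin_m0_x2 hpos hy0Y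
    have hm0 := pin_state hst hpin0
    obtain ⟨y2, hy2Y, hy21, hy22⟩ := blk_of hst (x := ((2,1,0) : Ctr3))
      (by norm_num) (by norm_num) (by norm_num) (chat_x8m hpos hB)
    have hy2 : y2 = (2,0,0) ∨ y2 = (2,1,0) := by
      by_cases h1 : y2 = (2,0,0)
      · exact Or.inl h1
      by_cases h2 : y2 = (2,1,0)
      · exact Or.inr h2
      exact absurd (h3b' y2 hy21 h1 h2) hy22
    rcases hy2 with rfl | rfl
    · exfalso
      have := hm0 (2,0,0) hy2Y rfl
      simp [Prod.ext_iff] at this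
    have hpin1 := pin_m1_x8 hpos hY hy2Y
    have hm1 := pin_state hst hpin1
    have hno0m2 : ∀ z ∈ Y, z.2.1 = 2 → z.1 ≠ 0 := by
      intro z hz hzm hz0
      have := hone z hz (0,0,0) hy0Y hz0
      rw [this] at hzm
      simp at hzm
    obtain ⟨y1, hy1Y, hy11, hy12⟩ := blk_of hst (x := ((1,2,0) : Ctr3))
      (by norm_num) (by norm_num) (by norm_num) (chat_x6m hpos hB hno0m2)
    have hy1 : y1 = (1,0,0) ∨ y1 = (1,2,0) := by
      by_cases h1 : y1 = (1,0,0)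
      · exact Or.inl h1
      by_cases h2 : y1 = (1,2,0)
      · exact Or.inr h2
      exact absurd (k2b' y1 hy11 h1 h2) hy12
    rcases hy1 with rfl | rfl
    · exfalso
      have := hm0 (1,0,0) hy1Y rfl
      simp [Prod.ext_iff] at this
    apply Finset.Subset.antisymm
    · intro z hz
      have hb := hB z hz
      have h3 : z.1 = 0 ∨ z.1 = 1 ∨ z.1 = 2 := by omega
      rcases h3 with h | h | h
      · rw [hone z hz (0,0,0) hy0Y h]; simp [Y1F]
      · rw [hone z hz (1,2,0) hy1Y h]; simp [Y1F]
      · rw [hone z hz (2,1,0) hy2Y h]; simp [Y1F]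
    · intro z hz
      simp only [Y1F, Finset.mem_insert, Finset.mem_singleton] at hz
      rcases hz with rfl | rfl | rfl <;> assumption

/-- Uniqueness under the doubly-misreported profile. -/
lemma uniq_P'' (hpos : ∀ a, 0 < s a) (h01 : s 1 < s 0)
    (j1a' : ∀ z : Ctr3, z.1 = 0 → z ≠ (0,1,0) → p 0 (0,1,0) < p 0 z)
    (j1b' : ∀ z : Ctr3, z.1 = 0 → z ≠ (0,1,0) → z ≠ (0,2,0) → p 0 (0,2,0) < p 0 z)
    (k2a' : ∀ z : Ctr3, z.1 = 1 → z ≠ (1,0,0) → p 1 (1,0,0) < p 1 z)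
    (h3a' : ∀ z : Ctr3, z.1 = 2 → z ≠ (2,0,0) → p 2 (2,0,0) < p 2 z)
    (h3b' : ∀ z : Ctr3, z.1 = 2 → z ≠ (2,0,0) → z ≠ (2,1,0) → p 2 (2,1,0) < p 2 z)
    (hY : Alloc16 s Y) (hst : Stable16 s p Y) : Y = Y2F := by
  have hB := hY.1
  have hone : ∀ x ∈ Y, ∀ y ∈ Y, x.1 = y.1 → x = y :=
    fun x hx y hy h => alloc_one hY hx hy h
  obtain ⟨y0, hy0Y, hy01, hy02⟩ := blk_of hst (x := ((0,2,0) : Ctr3))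
    (by norm_num) (by norm_num) (by norm_num) (chat_x3m hpos)
  have hy0 : y0 = (0,1,0) ∨ y0 = (0,2,0) := by
    by_cases h1 : y0 = (0,1,0)
    · exact Or.inl h1
    by_cases h2 : y0 = (0,2,0)
    · exact Or.inr h2
    exact absurd (j1b' y0 hy01 h1 h2) hy02
  rcases hy0 with rfl | rfl
  · -- a1 = x1: allocation is Y2F
    have hno3 : ∀ z ∈ Y, z.2.1 = 1 → z.1 ≠ 2 := by
      intro z hz hzm hz2
      have hpin := pin_m2_a3 hpos hY hz hzm hz2
      have hco := pin_state hst hpin (0,1,0) hy0Y rfl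
      rw [← hco] at hz2
      simp at hz2
    obtain ⟨y2, hy2Y, hy21, hy22⟩ := blk_of hst (x := ((2,1,0) : Ctr3))
      (by norm_num) (by norm_num) (by norm_num) (chat_x8m hpos hB)
    have hy2 : y2 = (2,0,0) := by
      by_cases h1 : y2 = (2,0,0)
      · exact h1
      by_cases h2 : y2 = (2,1,0)
      · subst h2
        exact absurd hy21 (hno3 _ hy2Y rfl)
      exact absurd (h3b' y2 hy21 h1 h2) hy22
    subst hy2
    have hno0m0 : ∀ z ∈ Y, z.2.1 = 0 → z.1 ≠ 0 := by
      intro z hz hzm hz0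
      have := hone z hz (0,1,0) hy0Y hz0
      rw [this] at hzm
      simp at hzm
    obtain ⟨y1, hy1Y, hy11, hy12⟩ := blk_of hst (x := ((1,0,0) : Ctr3))
      (by norm_num) (by norm_num) (by norm_num) (chat_x5m hpos hB hno0m0)
    have hy1 : y1 = (1,0,0) := by
      by_contra hne
      exact hy12 (k2a' y1 hy11 hne)
    subst hy1
    apply Finset.Subset.antisymm
    · intro z hz
      have hb := hB z hz
      have h3 : z.1 = 0 ∨ z.1 = 1 ∨ z.1 = 2 := by omega
      rcases h3 with h | h | h
      · rw [hone z hz (0,1,0) hy0Y h]; simp [Y2F]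
      · rw [hone z hz (1,0,0) hy1Y h]; simp [Y2F]
      · rw [hone z hz (2,0,0) hy2Y h]; simp [Y2F]
    · intro z hz
      simp only [Y2F, Finset.mem_insert, Finset.mem_singleton] at hz
      rcases hz with rfl | rfl | rfl <;> assumption
  · -- a1 = x3 : contradiction
    exfalso
    have hno0m0 : ∀ z ∈ Y, z.2.1 = 0 → z.1 ≠ 0 := by
      intro z hz hzm hz0
      have := hone z hz (0,2,0) hy0Y hz0
      rw [this] at hzm
      simp at hzm
    -- a2 holds x5
    obtain ⟨y1, hy1Y, hy11, hy12⟩ := blk_of hst (x := ((1,0,0) : Ctr3))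
      (by norm_num) (by norm_num) (by norm_num) (chat_x5m hpos hB hno0m0)
    have hy1 : y1 = (1,0,0) := by
      by_contra hne
      exact hy12 (k2a' y1 hy11 hne)
    subst hy1
    -- a3 holds x7
    obtain ⟨y2, hy2Y, hy21, hy22⟩ := blk_of hst (x := ((2,0,0) : Ctr3))
      (by norm_num) (by norm_num) (by norm_num)
      (chat_x7m hpos h01 hB hy1Y hone hno0m0)
    have hy2 : y2 = (2,0,0) := by
      by_contra hne
      exact hy22 (h3a' y2 hy21 hne)
    subst hy2
    -- x1 blocks at m2
    have hch : Chat3 s (q16 s 1) (r16 s 1) (π16 1) 1 (insert (0,1,0) Y)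
        = {(0,1,0)} := by
      refine Chat3_single (by simp) rfl (by simp [r16]) (by simp [q16])
        (by simp [q16]; exact hpos 0) ?_
      intro z hz hzm
      rcases Finset.mem_insert.mp hz with rfl | hzY
      · exact le_refl _
      · exfalso
        have hb := hB z hzY
        have h3 : z.1 = 0 ∨ z.1 = 1 ∨ z.1 = 2 := by omega
        rcases h3 with h | h | h
        · rw [hone z hzY (0,2,0) hy0Y h] at hzm; simp at hzm
        · rw [hone z hzY (1,0,0) hy1Y h] at hzm; simp at hzm
        · rw [hone z hzY (2,0,0) hy2Y h] at hzm; simp at hzm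
    obtain ⟨y3, hy3Y, hy31, hy32⟩ := blk_of hst (x := ((0,1,0) : Ctr3))
      (by norm_num) (by norm_num) (by norm_num) (by rw [hch]; simp)
    have hy3 : y3 = (0,1,0) := by
      by_contra hne
      exact hy32 (j1a' y3 hy31 hne)
    subst hy3
    have := hone (0,1,0) hy3Y (0,2,0) hy0Y rfl
    simp [Prod.ext_iff] at this

end Example7e
/-- Theorem 3(ii), via Example 7: no mechanism `φ` that
selects a stable allocation whenever one exists is strategy-proof in the
Example 7 setting: either `a₂` profits from the misreport `x₅ − x₆ − x₄` at the
true profile, or `a₁` profits from the misreport `x₁ − x₃ − x₂` at the profile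
where `a₂` has already misreported.  ("Profits" means: obtains a contract
strictly preferred, under her true preferences, to everything she holds under
truthful reporting.) -/
theorem ex7_no_stable_strategyproof_mechanism (s : ℕ → ℕ)
    (hpos : ∀ a, 0 < s a) (h12 : s 2 ≤ s 1) (h01 : s 1 < s 0)
    (pref : ℕ → Ctr3 → ℕ) (hinj : ∀ a, Function.Injective (pref a))
    (h1a : ∀ z : Ctr3, z.1 = 0 → z ≠ (0, 1, 0) →
      pref 0 (0, 1, 0) < pref 0 z)
    (h1b : ∀ z : Ctr3, z.1 = 0 → z ≠ (0, 1, 0) → z ≠ (0, 0, 0) →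
      pref 0 (0, 0, 0) < pref 0 z)
    (h1c : ∀ z : Ctr3, z.1 = 0 → z ≠ (0, 1, 0) → z ≠ (0, 0, 0) →
      z ≠ (0, 2, 0) → pref 0 (0, 2, 0) < pref 0 z)
    (h2a : ∀ z : Ctr3, z.1 = 1 → z ≠ (1, 1, 0) →
      pref 1 (1, 1, 0) < pref 1 z)
    (h2b : ∀ z : Ctr3, z.1 = 1 → z ≠ (1, 1, 0) → z ≠ (1, 0, 0) →
      pref 1 (1, 0, 0) < pref 1 z)
    (h2c : ∀ z : Ctr3, z.1 = 1 → z ≠ (1, 1, 0) → z ≠ (1, 0, 0) →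
      z ≠ (1, 2, 0) → pref 1 (1, 2, 0) < pref 1 z)
    (h3a : ∀ z : Ctr3, z.1 = 2 → z ≠ (2, 0, 0) →
      pref 2 (2, 0, 0) < pref 2 z)
    (h3b : ∀ z : Ctr3, z.1 = 2 → z ≠ (2, 0, 0) → z ≠ (2, 1, 0) →
      pref 2 (2, 1, 0) < pref 2 z)
    (pref2 : Ctr3 → ℕ) (hinj2 : Function.Injective pref2)
    (k2a : ∀ z : Ctr3, z.1 = 1 → z ≠ (1, 0, 0) →
      pref2 (1, 0, 0) < pref2 z)
    (k2b : ∀ z : Ctr3, z.1 = 1 → z ≠ (1, 0, 0) → z ≠ (1, 2, 0) →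
      pref2 (1, 2, 0) < pref2 z)
    (k2c : ∀ z : Ctr3, z.1 = 1 → z ≠ (1, 0, 0) → z ≠ (1, 2, 0) →
      z ≠ (1, 1, 0) → pref2 (1, 1, 0) < pref2 z)
    (pref1 : Ctr3 → ℕ) (hinj1 : Function.Injective pref1)
    (j1a : ∀ z : Ctr3, z.1 = 0 → z ≠ (0, 1, 0) →
      pref1 (0, 1, 0) < pref1 z)
    (j1b : ∀ z : Ctr3, z.1 = 0 → z ≠ (0, 1, 0) → z ≠ (0, 2, 0) →
      pref1 (0, 2, 0) < pref1 z)
    (j1c : ∀ z : Ctr3, z.1 = 0 → z ≠ (0, 1, 0) → z ≠ (0, 2, 0) →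
      z ≠ (0, 0, 0) → pref1 (0, 0, 0) < pref1 z)
    (φ : (ℕ → Ctr3 → ℕ) → Finset Ctr3)
    (hφ : ∀ p : ℕ → Ctr3 → ℕ,
      (∃ Y : Finset Ctr3, Alloc16 s Y ∧ Stable16 s p Y) →
      Alloc16 s (φ p) ∧ Stable16 s p (φ p)) :
    (∃ x ∈ φ (fun a => if a = 1 then pref2 else pref a), x.1 = 1 ∧
      ∀ y ∈ φ pref, y.1 = 1 → pref 1 x < pref 1 y) ∨
    (∃ x ∈ φ (fun a => if a = 0 then pref1 else
        if a = 1 then pref2 else pref a), x.1 = 0 ∧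
      ∀ y ∈ φ (fun a => if a = 1 then pref2 else pref a), y.1 = 0 →
        pref 0 x < pref 0 y) := by

  have hstY1 : Stable16 s pref Y1F := stable_Y1 hpos pref h1b h2c h3b
  have hF := hφ pref ⟨Y1F, alloc_Y1 hpos, hstY1⟩
  have hFeq : φ pref = Y1F := uniq_P hpos h01 h1b h2a h2c h3b hF.1 hF.2
  have hstY2' : Stable16 s (fun a => if a = 1 then pref2 else pref a) Y2F :=
    stable_Y2 hpos h01
      (by intro z hz1 hz2; simpa using h1a z hz1 hz2)
      (by intro z hz1 hz2; simpa using k2a z hz1 hz2)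
      (by intro z hz1 hz2; simpa using h3a z hz1 hz2)
  have hG := hφ _ ⟨Y2F, alloc_Y2 hpos, hstY2'⟩
  have hGeq := uniq_P' hpos h01
      (by intro z hz1 hz2 hz3; simpa using h1b z hz1 hz2 hz3)
      (by intro z hz1 hz2; simpa using k2a z hz1 hz2)
      (by intro z hz1 hz2 hz3; simpa using k2b z hz1 hz2 hz3)
      (by intro z hz1 hz2 hz3; simpa using h3b z hz1 hz2 hz3)
      hG.1 hG.2
  rcases hGeq with hG1 | hG2
  · -- the mechanism picks Y1F after a₂'s misreport: a₁ profits at the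
    -- doubly-misreported profile
    right
    have hstY2'' : Stable16 s
        (fun a => if a = 0 then pref1 else if a = 1 then pref2 else pref a)
        Y2F :=
      stable_Y2 hpos h01
        (by intro z hz1 hz2; simpa using j1a z hz1 hz2)
        (by intro z hz1 hz2; simpa using k2a z hz1 hz2)
        (by intro z hz1 hz2; simpa using h3a z hz1 hz2)
    have hH := hφ _ ⟨Y2F, alloc_Y2 hpos, hstY2''⟩
    have hHeq := uniq_P'' hpos h01
        (by intro z hz1 hz2; simpa using j1a z hz1 hz2)
        (by intro z hz1 hz2 hz3; simpa using j1b z hz1 hz2 hz3)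
        (by intro z hz1 hz2; simpa using k2a z hz1 hz2)
        (by intro z hz1 hz2; simpa using h3a z hz1 hz2)
        (by intro z hz1 hz2 hz3; simpa using h3b z hz1 hz2 hz3)
        hH.1 hH.2
    refine ⟨(0,1,0), ?_, rfl, ?_⟩
    · rw [hHeq]; simp [Y2F]
    · intro y hy hy0
      rw [hG1] at hy
      simp only [Y1F, Finset.mem_insert, Finset.mem_singleton] at hy
      rcases hy with rfl | rfl | rfl
      · exact h1a (0,0,0) rfl (by decide)
      · simp at hy0
      · simp at hy0
  · -- the mechanism picks Y2F after a₂'s misreport: a₂ profits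
    left
    refine ⟨(1,0,0), ?_, rfl, ?_⟩
    · rw [hG2]; simp [Y2F]
    · intro y hy hy1
      rw [hFeq] at hy
      simp only [Y1F, Finset.mem_insert, Finset.mem_singleton] at hy
      rcases hy with rfl | rfl | rfl
      · simp at hy1
      · exact h2b (1,2,0) rfl (by decide) (by decide)
      · simp at hy1
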